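/- Let K be a field, let n ≥ 0, let P ∈ K[X] be a monic polynomial of degree n+1, let u₁, …, uₙ ∈ K be pairwise distinct, and let U ∈ K be distinct from all u_i. Then for every T ∈ K: (U - T)·∏_{i=1}^n (u_i - T) - P(U)·∏_{i=1}^n (u_i - T) / ∏_{i=1}^n (U - u_i) + Σ_{i=1}^n [ P(u_i)·(U - T)·∏_{j≠i} (u_j - T) ] / [ (U - u_i)·∏_{j≠i} (u_i - u_j) ] = (-1)^{n+1}·P(T). -/

import Mathlib

open Polynomial Finset

private lemma prod_neg_aux {K : Type*} [CommRing K] {ι : Type*} (s : Finset ι) (f : ι → K) :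
    ∏ i ∈ s, (-f i) = (-1) ^ s.card * ∏ i ∈ s, f i := by
  rw [Finset.prod_congr rfl fun i _ => (neg_one_mul (f i)).symm,
    Finset.prod_mul_distrib, Finset.prod_const]

/-- The Lagrange-interpolation identity underlying the diagonal off-shell
relation of the modified algebraic Bethe ansatz. -/
theorem stmt15 {K : Type*} [Field K] (n : ℕ) (P : Polynomial K)
    (hP : P.Monic) (hdeg : P.natDegree = n + 1)
    (u : Fin n → K) (hinj : Function.Injective u)
    (U : K) (hU : ∀ i, U ≠ u i) (T : K) :
    (U - T) * ∏ i, (u i - T)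
      - P.eval U * (∏ i, (u i - T)) / ∏ i, (U - u i)
      + ∑ i, P.eval (u i) * (U - T) * (∏ j ∈ Finset.univ.erase i, (u j - T))
          / ((U - u i) * ∏ j ∈ Finset.univ.erase i, (u i - u j))
      = (-1) ^ (n + 1) * P.eval T := by
  classical
  have hUu : ∀ i, U - u i ≠ 0 := fun i => sub_ne_zero.mpr (hU i)
  have huu : ∀ i j : Fin n, i ≠ j → u i - u j ≠ 0 :=
    fun i j h => sub_ne_zero.mpr (fun e => h (hinj e))
  have hprodU : (∏ i, (U - u i)) ≠ 0 := Finset.prod_ne_zero_iff.mpr fun i _ => hUu i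
  have hprodu : ∀ k : Fin n, (∏ j ∈ Finset.univ.erase k, (u k - u j)) ≠ 0 := fun k =>
    Finset.prod_ne_zero_iff.mpr fun j hj => huu k j (Ne.symm (Finset.ne_of_mem_erase hj))
  set Pi : Polynomial K := ∏ i, (C (u i) - X) with hPidef
  set c : Fin n → K := fun i =>
    P.eval (u i) / ((U - u i) * ∏ j ∈ Finset.univ.erase i, (u i - u j)) with hc
  set L : Polynomial K :=
    (C U - X) * Pi - C (P.eval U / ∏ i, (U - u i)) * Pi
      + ∑ i, C (c i) * ((C U - X) * ∏ j ∈ Finset.univ.erase i, (C (u j) - X)) with hLdef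
  -- evaluation of L
  have hevalL : ∀ t : K, L.eval t =
      (U - t) * ∏ i, (u i - t)
        - (P.eval U / ∏ i, (U - u i)) * ∏ i, (u i - t)
        + ∑ i, c i * ((U - t) * ∏ j ∈ Finset.univ.erase i, (u j - t)) := by
    intro t
    simp [hLdef, hPidef, Polynomial.eval_prod, Polynomial.eval_finset_sum]
  have hLU : L.eval U = (-1 : K) ^ (n + 1) * P.eval U := by
    rw [hevalL U]
    have hpn : (∏ i, (u i - U)) = (-1 : K) ^ n * ∏ i, (U - u i) := by
      rw [Finset.prod_congr rfl (fun (i : Fin n) _ => show u i - U = -(U - u i) by ring),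
        prod_neg_aux]
      simp
    rw [hpn]
    have hsum : ∑ i, c i * ((U - U) * ∏ j ∈ Finset.univ.erase i, (u j - U)) = 0 :=
      Finset.sum_eq_zero fun i _ => by simp
    rw [hsum]
    have hcan : (P.eval U / ∏ i, (U - u i)) * ((-1 : K) ^ n * ∏ i, (U - u i))
        = (-1 : K) ^ n * P.eval U := by
      rw [mul_comm ((-1 : K) ^ n) (∏ i, (U - u i)), ← mul_assoc,
        div_mul_cancel₀ _ hprodU]
      exact mul_comm _ _
    rw [hcan, pow_succ]
    ring
  have hLu : ∀ k : Fin n, L.eval (u k) = (-1 : K) ^ (n + 1) * P.eval (u k) := by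
    intro k
    rw [hevalL (u k)]
    have hz : (∏ i, (u i - u k)) = 0 :=
      Finset.prod_eq_zero (Finset.mem_univ k) (sub_self _)
    rw [hz]
    have hsum : ∑ i, c i * ((U - u k) * ∏ j ∈ Finset.univ.erase i, (u j - u k))
        = c k * ((U - u k) * ∏ j ∈ Finset.univ.erase k, (u j - u k)) := by
      refine Finset.sum_eq_single k (fun i _ hik => ?_) (by simp)
      have hz2 : (∏ j ∈ Finset.univ.erase i, (u j - u k)) = 0 :=
        Finset.prod_eq_zero (Finset.mem_erase.mpr ⟨hik.symm, Finset.mem_univ k⟩)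
          (sub_self _)
      rw [hz2]; ring
    rw [hsum]
    have hpe : (∏ j ∈ Finset.univ.erase k, (u j - u k))
        = (-1 : K) ^ (n - 1) * ∏ j ∈ Finset.univ.erase k, (u k - u j) := by
      rw [Finset.prod_congr rfl
        (fun j _ => show u j - u k = -(u k - u j) by ring), prod_neg_aux]
      simp [Finset.card_erase_of_mem (Finset.mem_univ k)]
    have hck : c k * ((U - u k) * ∏ j ∈ Finset.univ.erase k, (u j - u k))
        = (-1 : K) ^ (n - 1) * P.eval (u k) := by
      rw [hpe, hc]
      have hne : (U - u k) * (∏ j ∈ Finset.univ.erase k, (u k - u j)) ≠ 0 :=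
        mul_ne_zero (hUu k) (hprodu k)
      show P.eval (u k) / ((U - u k) * ∏ j ∈ Finset.univ.erase k, (u k - u j))
          * ((U - u k) * ((-1 : K) ^ (n - 1) * ∏ j ∈ Finset.univ.erase k, (u k - u j))) = _
      rw [div_mul_eq_mul_div, div_eq_iff hne]
      ring
    rw [hck]
    have hsign : ((-1 : K)) ^ (n - 1) = (-1) ^ (n + 1) := by
      have hk := k.pos
      rw [show n + 1 = (n - 1) + 2 by omega, pow_add]
      norm_num
    rw [hsign]
    ring
  -- key polynomial identity
  have hL : L = C ((-1 : K) ^ (n + 1)) * P := by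
    have hzero : L - C ((-1 : K) ^ (n + 1)) * P = 0 := by
      set D := L - C ((-1 : K) ^ (n + 1)) * P with hDdef
      have hW : ((X - C U) * ∏ i, (X - C (u i))).Monic :=
        (monic_X_sub_C U).mul (monic_prod_of_monic _ _ fun i _ => monic_X_sub_C (u i))
      have hWdeg : ((X - C U) * ∏ i, (X - C (u i))).natDegree = n + 1 := by
        rw [Polynomial.natDegree_mul (monic_X_sub_C U).ne_zero
          (monic_prod_of_monic _ _ fun (i : Fin n) _ => monic_X_sub_C (u i)).ne_zero,
          natDegree_X_sub_C, Polynomial.natDegree_prod _ _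
            (fun i _ => (monic_X_sub_C (u i)).ne_zero)]
        simp [add_comm]
      have hAPi : (C U - X) * Pi
          = C ((-1 : K) ^ (n + 1)) * ((X - C U) * ∏ i, (X - C (u i))) := by
        have h2 : Pi = (-1 : K[X]) ^ n * ∏ i, (X - C (u i)) := by
          rw [hPidef, Finset.prod_congr rfl
            (fun (i : Fin n) _ => show (C (u i) - X : K[X]) = -(X - C (u i)) by ring),
            prod_neg_aux]
          simp
        rw [show (C U - X : K[X]) = -(X - C U) by ring, h2]
        rw [map_pow, map_neg, map_one]
        ring
      have hsub : ((X - C U) * ∏ i, (X - C (u i)) - P).natDegree ≤ n := by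
        by_cases h0 : (X - C U) * ∏ i, (X - C (u i)) - P = 0
        · simp [h0]
        · have hdd : ((X - C U) * ∏ i, (X - C (u i))).degree = P.degree := by
            rw [Polynomial.degree_eq_natDegree hW.ne_zero, hWdeg,
              Polynomial.degree_eq_natDegree hP.ne_zero, hdeg]
          have hlc : ((X - C U) * ∏ i, (X - C (u i))).leadingCoeff = P.leadingCoeff := by
            rw [hW.leadingCoeff, hP.leadingCoeff]
          have hlt := Polynomial.degree_sub_lt hdd hW.ne_zero hlc
          rw [Polynomial.degree_eq_natDegree hW.ne_zero, hWdeg] at hlt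
          exact Nat.lt_succ_iff.mp ((natDegree_lt_iff_degree_lt h0).mpr (by exact_mod_cast hlt))
      have hD1 : ((C U - X) * Pi - C ((-1 : K) ^ (n + 1)) * P).natDegree ≤ n := by
        rw [hAPi, ← mul_sub]
        exact (natDegree_C_mul_le _ _).trans hsub
      have hPideg : Pi.natDegree ≤ n := by
        refine (natDegree_prod_le _ _).trans ?_
        calc ∑ i : Fin n, (C (u i) - X : K[X]).natDegree
            ≤ ∑ _i : Fin n, 1 := Finset.sum_le_sum (fun i _ =>
              (natDegree_sub_le _ _).trans (by simp))
          _ = n := by simp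
      have hD2 : (C (P.eval U / ∏ i, (U - u i)) * Pi).natDegree ≤ n :=
        (natDegree_C_mul_le _ _).trans hPideg
      have hD3 : (∑ i, C (c i) *
          ((C U - X) * ∏ j ∈ Finset.univ.erase i, (C (u j) - X))).natDegree ≤ n := by
        refine Polynomial.natDegree_sum_le_of_forall_le _ _ fun i _ => ?_
        refine (natDegree_C_mul_le _ _).trans ((natDegree_mul_le).trans ?_)
        have ha : (C U - X : K[X]).natDegree ≤ 1 := (natDegree_sub_le _ _).trans (by simp)
        have hb : (∏ j ∈ Finset.univ.erase i, (C (u j) - X) : K[X]).natDegree ≤ n - 1 := by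
          refine (natDegree_prod_le _ _).trans ?_
          calc ∑ j ∈ Finset.univ.erase i, (C (u j) - X : K[X]).natDegree
              ≤ ∑ _j ∈ Finset.univ.erase i, 1 := Finset.sum_le_sum (fun j _ =>
                (natDegree_sub_le _ _).trans (by simp))
            _ = n - 1 := by
              simp [Finset.card_erase_of_mem (Finset.mem_univ i)]
        have hn : 1 ≤ n := i.pos
        omega
      have hDdeg : D.natDegree ≤ n := by
        have hre : D = (((C U - X) * Pi - C ((-1 : K) ^ (n + 1)) * P)
            - C (P.eval U / ∏ i, (U - u i)) * Pi)
            + ∑ i, C (c i) * ((C U - X) * ∏ j ∈ Finset.univ.erase i, (C (u j) - X)) := by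
          rw [hDdef, hLdef]; ring
        rw [hre]
        refine (natDegree_add_le _ _).trans (max_le ((natDegree_sub_le _ _).trans
          (max_le hD1 hD2)) hD3)
      -- evaluations vanish at the n+1 points
      have hevalU : D.eval U = 0 := by
        rw [hDdef]
        simp only [Polynomial.eval_sub, Polynomial.eval_mul, Polynomial.eval_C]
        rw [hLU]; ring
      have hevalu : ∀ k : Fin n, D.eval (u k) = 0 := by
        intro k
        rw [hDdef]
        simp only [Polynomial.eval_sub, Polynomial.eval_mul, Polynomial.eval_C]
        rw [hLu k]; ring
      -- conclude D = 0
      have finj : Function.Injective (fun o : Option (Fin n) => o.elim U u) := by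
        intro a b hab
        match a, b with
        | none, none => rfl
        | none, some j => exact absurd hab (hU j)
        | some i, none => exact absurd hab.symm (hU i)
        | some i, some j => exact congrArg some (hinj hab)
      refine Polynomial.eq_zero_of_natDegree_lt_card_of_eval_eq_zero D finj
        (fun o => ?_) ?_
      · cases o with
        | none => exact hevalU
        | some k => exact hevalu k
      · rw [Fintype.card_option, Fintype.card_fin]
        exact Nat.lt_succ_of_le hDdeg
    exact sub_eq_zero.mp hzero
  have hT := congrArg (Polynomial.eval T) hL
  rw [hevalL T] at hT
  simp only [Polynomial.eval_mul, Polynomial.eval_C] at hT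
  simp only [hc] at hT
  have hterm : ∀ i : Fin n,
      P.eval (u i) * (U - T) * (∏ j ∈ Finset.univ.erase i, (u j - T))
          / ((U - u i) * ∏ j ∈ Finset.univ.erase i, (u i - u j))
        = (P.eval (u i) / ((U - u i) * ∏ j ∈ Finset.univ.erase i, (u i - u j)))
          * ((U - T) * ∏ j ∈ Finset.univ.erase i, (u j - T)) := fun i => by
    ring
  rw [Finset.sum_congr rfl (fun i _ => hterm i)]
  linear_combination hT
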